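/- For s > 0, the infinite product ∏_{j=1}^∞ (2^j − 1)/(2^j − 1 + s) equals the series ∑_{j=1}^∞ (−1)^{j−1}·2^j/(2^j − 1 + s)·∏_{l=1}^{j−1} 1/(2^l − 1) (partial fraction expansion). -/

import Mathlib

open Finset Filter Topology

private lemma two_le_pow (j : ℕ) : (2:ℝ) ≤ 2 ^ (j + 1) := by
  calc (2:ℝ) = 2 ^ 1 := (pow_one 2).symm
  _ ≤ 2 ^ (j+1) := by
    apply pow_le_pow_right₀ one_le_two
    omega

private lemma pow_sub_pos {j k : ℕ} (h : j < k) : (0:ℝ) < 2 ^ (k+1) - 2 ^ (j+1) := by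
  have : (2:ℝ) ^ (j+1) < 2 ^ (k+1) := by
    apply pow_lt_pow_right₀ one_lt_two
    omega
  linarith

private lemma pow_sub_ne {j k : ℕ} (h : j ≠ k) : (2:ℝ) ^ (k+1) - 2 ^ (j+1) ≠ 0 := by
  rcases lt_or_gt_of_ne h with h | h
  · exact ne_of_gt (by linarith [pow_sub_pos h])
  · exact ne_of_lt (by linarith [pow_sub_pos h])

private lemma one_lt_pow2 (j : ℕ) : (1:ℝ) < 2 ^ (j+1) := by linarith [two_le_pow j]

private noncomputable def pfA (n j : ℕ) : ℝ :=
  ((2:ℝ) ^ (j+1) - 1) *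
    ∏ k ∈ (Finset.range n).erase j, ((2:ℝ) ^ (k+1) - 1) / ((2:ℝ) ^ (k+1) - (2:ℝ) ^ (j+1))

private noncomputable def pfc (j : ℕ) : ℝ :=
  (-1:ℝ) ^ j * 2 ^ (j+1) * ∏ l ∈ Finset.range j, ((2:ℝ) ^ (l+1) - 1)⁻¹

private lemma pfA_sum (n : ℕ) : ∀ s : ℝ, (∀ j, j < n + 1 → (2:ℝ) ^ (j+1) - 1 + s ≠ 0) →
    ∏ j ∈ range (n+1), ((2:ℝ) ^ (j+1) - 1) / ((2:ℝ) ^ (j+1) - 1 + s)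
      = ∑ j ∈ range (n+1), pfA (n+1) j / ((2:ℝ) ^ (j+1) - 1 + s) := by
  induction n with
  | zero => intro s hs; simp [pfA]
  | succ n ih =>
    intro s hs
    have hsn : ∀ j, j < n + 1 → (2:ℝ) ^ (j+1) - 1 + s ≠ 0 := fun j hj => hs j (by omega)
    -- ih at the special point s' = 1 - 2^(n+2)
    have hs' : ∀ j, j < n + 1 → (2:ℝ) ^ (j+1) - 1 + (1 - (2:ℝ) ^ (n+1+1)) ≠ 0 := by
      intro j hj
      have := pow_sub_ne (show j ≠ n + 1 by omega)
      intro h; apply this; linarith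
    have ihE : ∏ j ∈ range (n+1), ((2:ℝ) ^ (j+1) - 1) / ((2:ℝ) ^ (j+1) - (2:ℝ) ^ (n+1+1))
        = ∑ j ∈ range (n+1), pfA (n+1) j / ((2:ℝ) ^ (j+1) - (2:ℝ) ^ (n+1+1)) := by
      have := ih (1 - (2:ℝ) ^ (n+1+1)) hs'
      simpa [show ∀ x : ℝ, x - 1 + (1 - (2:ℝ) ^ (n+1+1)) = x - (2:ℝ) ^ (n+1+1) from
        fun x => by ring] using this
    have hAn : pfA (n+1+1) (n+1)
        = ((2:ℝ) ^ (n+1+1) - 1) *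
            ∑ j ∈ range (n+1), pfA (n+1) j / ((2:ℝ) ^ (j+1) - (2:ℝ) ^ (n+1+1)) := by
      rw [pfA, range_add_one, erase_insert (by simp), ihE]
    have step1 : ∑ x ∈ range (n+1), pfA (n+1+1) x / ((2:ℝ) ^ (x+1) - 1 + s)
        = ∑ x ∈ range (n+1),
            pfA (n+1) x * (((2:ℝ) ^ (n+1+1) - 1) / ((2:ℝ) ^ (n+1+1) - (2:ℝ) ^ (x+1)))
              / ((2:ℝ) ^ (x+1) - 1 + s) := by
      refine sum_congr rfl fun j hj => ?_
      rw [mem_range] at hj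
      rw [pfA, pfA, range_add_one, erase_insert_of_ne (by omega : n + 1 ≠ j),
        prod_insert (by simp)]
      ring
    rw [prod_range_succ, ih s hsn]
    conv_rhs => rw [sum_range_succ]
    rw [step1, hAn, Finset.mul_sum,
      Finset.sum_div, ← Finset.sum_add_distrib, Finset.sum_mul]
    refine sum_congr rfl fun j hj => ?_
    rw [mem_range] at hj
    have h1 : (2:ℝ) ^ (j+1) - 1 + s ≠ 0 := hs j (by omega)
    have h2 : (2:ℝ) ^ (n+1+1) - 1 + s ≠ 0 := hs (n+1) (by omega)
    have h3 : (2:ℝ) ^ (n+1+1) - (2:ℝ) ^ (j+1) ≠ 0 := pow_sub_ne (by omega)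
    have h4 : (2:ℝ) ^ (j+1) - (2:ℝ) ^ (n+1+1) ≠ 0 := pow_sub_ne (by omega)
    field_simp
    ring

private lemma pow2_ne (k : ℕ) : ((2:ℝ) ^ (k+1) - 1) ≠ 0 :=
  ne_of_gt (by linarith [one_lt_pow2 k])

private lemma pfA_closed (j : ℕ) : ∀ m : ℕ,
    pfA (j+1+m) j = pfc j * ∏ i ∈ range (j+1), (1 - ((2:ℝ) ^ (m+1+i))⁻¹) := by
  intro m
  induction m with
  | zero =>
    rw [pfA, pfc, show j+1+0 = j+1 from rfl,
      show (range (j+1)).erase j = range j from by rw [range_add_one, erase_insert (by simp)]]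
    have key : ∀ k ∈ range j, ((2:ℝ) ^ (k+1) - 1) / ((2:ℝ) ^ (k+1) - (2:ℝ) ^ (j+1))
        = (-1) * (((2:ℝ) ^ (k+1) - 1) * ((2:ℝ) ^ (k+1))⁻¹ *
            (((2:ℝ) ^ ((j-1-k)+1) - 1)⁻¹)) := by
      intro k hk; rw [mem_range] at hk
      have he : (2:ℝ) ^ (k+1) * ((2:ℝ) ^ ((j-1-k)+1) - 1) = (2:ℝ) ^ (j+1) - (2:ℝ) ^ (k+1) := by
        rw [mul_sub, mul_one, ← pow_add]
        congr 2
        omega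
      have h2 : ((2:ℝ) ^ (k+1)) ≠ 0 := by positivity
      have h3 : ((2:ℝ) ^ ((j-1-k)+1) - 1) ≠ 0 := pow2_ne _
      rw [show (2:ℝ) ^ (k+1) - (2:ℝ) ^ (j+1)
          = -((2:ℝ) ^ (k+1) * ((2:ℝ) ^ ((j-1-k)+1) - 1)) from by linarith]
      field_simp
    rw [prod_congr rfl key, prod_mul_distrib, prod_mul_distrib, prod_const, card_range]
    have hrefl : ∏ k ∈ range j, (((2:ℝ) ^ ((j-1-k)+1) - 1)⁻¹)
        = ∏ k ∈ range j, (((2:ℝ) ^ (k+1) - 1)⁻¹) :=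
      Finset.prod_range_reflect (fun k => ((2:ℝ) ^ (k+1) - 1)⁻¹) j
    rw [hrefl]
    have key2 : ∀ i ∈ range (j+1), (1 - ((2:ℝ) ^ (0+1+i))⁻¹)
        = ((2:ℝ) ^ (i+1) - 1) * ((2:ℝ) ^ (i+1))⁻¹ := by
      intro i _
      rw [show 0+1+i = i+1 from by omega]
      have h2 : ((2:ℝ) ^ (i+1)) ≠ 0 := by positivity
      field_simp
    rw [prod_congr rfl key2, prod_range_succ, prod_mul_distrib]
    simp only [prod_inv_distrib]
    have hP1 : (∏ k ∈ range j, ((2:ℝ) ^ (k+1) - 1)) ≠ 0 := prod_ne_zero_iff.2 fun k _ => pow2_ne k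
    have hP2 : (∏ k ∈ range j, ((2:ℝ) ^ (k+1))) ≠ 0 := prod_ne_zero_iff.2 fun k _ => by positivity
    have hj1 : ((2:ℝ) ^ (j+1)) ≠ 0 := by positivity
    field_simp
  | succ m ih =>
    have hrec : pfA (j+1+(m+1)) j = pfA (j+1+m) j *
        (((2:ℝ) ^ ((j+1+m)+1) - 1) / ((2:ℝ) ^ ((j+1+m)+1) - (2:ℝ) ^ (j+1))) := by
      rw [pfA, pfA, show j+1+(m+1) = (j+1+m)+1 from by omega, range_add_one,
        erase_insert_of_ne (by omega : j+1+m ≠ j), prod_insert (by simp)]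
      ring
    rw [hrec, ih]
    set g : ℕ → ℝ := fun i => 1 - ((2:ℝ) ^ (m+1+i))⁻¹ with hg
    have hg0 : g 0 ≠ 0 := by
      have h1 : (1:ℝ) < 2 ^ (m+1) := one_lt_pow2 m
      have : ((2:ℝ) ^ (m+1+0))⁻¹ < 1 := by
        rw [show m+1+0 = m+1 from rfl]
        rw [inv_lt_one_iff₀]
        right; exact h1
      simp only [hg]
      intro h; rw [sub_eq_zero] at h; rw [← h] at this; exact lt_irrefl _ this
    have hshift : ∏ i ∈ range (j+1), (1 - ((2:ℝ) ^ (m+1+1+i))⁻¹)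
        = ∏ i ∈ range (j+1), g (i+1) := by
      refine prod_congr rfl fun i _ => ?_
      simp only [hg]
      rw [show m+1+1+i = m+1+(i+1) from by omega]
    have hsplit : ∏ i ∈ range (j+1), g (i+1) = (∏ i ∈ range (j+1), g i) * g (j+1) / g 0 := by
      have h1 := Finset.prod_range_succ' g (j+1)
      have h2 := Finset.prod_range_succ g (j+1)
      rw [h2] at h1
      field_simp
      linarith [h1]
    rw [hshift, hsplit]
    have keyr : ∀ X Y : ℝ, 2 ≤ X → 2 ≤ Y → (1 - (X*Y)⁻¹)/(1-X⁻¹) = (X*Y-1)/(X*Y-Y) := by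
      intro X Y hX hY
      have hX0 : X ≠ 0 := by linarith
      have hY0 : Y ≠ 0 := by linarith
      have h1 : X*Y - Y ≠ 0 := by nlinarith
      have h2 : 1 - X⁻¹ ≠ 0 := by
        have : X⁻¹ < 1 := by rw [inv_lt_one_iff₀]; right; linarith
        intro h; rw [sub_eq_zero] at h; rw [← h] at this; exact lt_irrefl _ this
      have h3 : X*Y ≠ 0 := mul_ne_zero hX0 hY0
      rw [div_eq_div_iff h2 h1]
      field_simp
    have hgratio : g (j+1) / g 0 = ((2:ℝ) ^ ((j+1+m)+1) - 1) / ((2:ℝ) ^ ((j+1+m)+1) - (2:ℝ) ^ (j+1)) := by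
      simp only [hg]
      have hXY : (2:ℝ) ^ (m+1+(j+1)) = (2:ℝ) ^ (m+1) * (2:ℝ) ^ (j+1) := pow_add 2 (m+1) (j+1)
      have hXY2 : (2:ℝ) ^ ((j+1+m)+1) = (2:ℝ) ^ (m+1) * (2:ℝ) ^ (j+1) := by
        rw [← pow_add]; congr 1; omega
      rw [hXY, hXY2, show m+1+0 = m+1 from rfl]
      exact keyr _ _ (two_le_pow m) (two_le_pow j)
    rw [div_eq_mul_inv, div_eq_mul_inv] at hgratio ⊢
    rw [mul_assoc, mul_assoc, ← hgratio]
    try ring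

private lemma weier (t : Finset ℕ) (x : ℕ → ℝ) (h0 : ∀ i ∈ t, 0 ≤ x i)
    (h1 : ∀ i ∈ t, x i ≤ 1) : 1 - ∑ i ∈ t, x i ≤ ∏ i ∈ t, (1 - x i) := by
  induction t using Finset.cons_induction with
  | empty => simp
  | cons a t ha ih =>
    rw [Finset.sum_cons, Finset.prod_cons]
    have hxa0 : 0 ≤ x a := h0 a (Finset.mem_cons_self a t)
    have hxa1 : x a ≤ 1 := h1 a (Finset.mem_cons_self a t)
    have h0' : ∀ i ∈ t, 0 ≤ x i := fun i hi => h0 i (Finset.mem_cons_of_mem hi)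
    have h1' : ∀ i ∈ t, x i ≤ 1 := fun i hi => h1 i (Finset.mem_cons_of_mem hi)
    have hsum0 : 0 ≤ ∑ i ∈ t, x i := sum_nonneg h0'
    have ih' := ih h0' h1'
    nlinarith [mul_le_mul_of_nonneg_left ih' (by linarith : (0:ℝ) ≤ 1 - x a),
      mul_nonneg hxa0 hsum0]

private lemma sum_id_bound (j : ℕ) : 2*j+1 ≤ 4 + ∑ l ∈ Finset.range j, l := by
  induction j with
  | zero => simp
  | succ n ih =>
    rw [Finset.sum_range_succ]
    rcases n with _ | _ | n
    · simp
    · simp [Finset.sum_range_succ]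
    · omega

private lemma pfc_bound (j : ℕ) :
    (2:ℝ) ^ (j+1) * (∏ l ∈ range j, ((2:ℝ) ^ (l+1) - 1)⁻¹) ≤ 16 * (1/2:ℝ) ^ j := by
  have hQpos : (0:ℝ) < ∏ l ∈ range j, ((2:ℝ) ^ (l+1) - 1) :=
    prod_pos fun l _ => by linarith [one_lt_pow2 l]
  have hQge : (2:ℝ) ^ (∑ l ∈ range j, l) ≤ ∏ l ∈ range j, ((2:ℝ) ^ (l+1) - 1) := by
    rw [← Finset.prod_pow_eq_pow_sum]
    apply prod_le_prod (fun l _ => by positivity)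
    intro l _
    have h1 : (1:ℝ) ≤ 2 ^ l := one_le_pow₀ one_le_two
    have h2 : (2:ℝ) ^ (l+1) = 2 ^ l * 2 := pow_succ 2 l
    linarith
  have hpow : (2:ℝ) ^ (2*j+1) ≤ 2 ^ (4 + ∑ l ∈ range j, l) :=
    pow_le_pow_right₀ one_le_two (sum_id_bound j)
  rw [prod_inv_distrib]
  rw [show (16:ℝ) * (1/2:ℝ)^j = 2^4 * ((2:ℝ)^j)⁻¹ from by
    rw [div_pow, one_pow]; norm_num [div_eq_mul_inv]]
  have hE : (0:ℝ) < 2 ^ (∑ l ∈ range j, l) := by positivity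
  calc (2:ℝ) ^ (j+1) * ((∏ l ∈ range j, ((2:ℝ) ^ (l+1) - 1))⁻¹)
      ≤ (2:ℝ) ^ (j+1) * ((2:ℝ) ^ (∑ l ∈ range j, l))⁻¹ := by
        apply mul_le_mul_of_nonneg_left _ (by positivity)
        exact inv_anti₀ hE hQge
    _ ≤ 2^4 * ((2:ℝ)^j)⁻¹ := by
        have h2 : (2:ℝ) ^ (j+1) * (2:ℝ) ^ j ≤ 2^4 * 2 ^ (∑ l ∈ range j, l) := by
          rw [← pow_add, ← pow_add]
          exact pow_le_pow_right₀ one_le_two (by have := sum_id_bound j; omega)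
        rw [← div_eq_mul_inv, ← div_eq_mul_inv, div_le_div_iff₀ hE (by positivity)]
        linarith

private lemma hasProd_of_anti {f : ℕ → ℝ} (h0 : ∀ j, 0 ≤ f j) (h1 : ∀ j, f j ≤ 1) :
    HasProd f (⨅ n, ∏ j ∈ range n, f j) := by
  set p : ℕ → ℝ := fun n => ∏ j ∈ range n, f j with hp
  have hp_nonneg : ∀ n, 0 ≤ p n := fun n => prod_nonneg fun j _ => h0 j
  have hp_anti : Antitone p := by
    apply antitone_nat_of_succ_le
    intro n
    rw [hp]
    simp only []
    rw [prod_range_succ]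
    exact mul_le_of_le_one_right (hp_nonneg n) (h1 n)
  have hbdd : BddBelow (Set.range p) := ⟨0, fun y ⟨n, hn⟩ => hn ▸ hp_nonneg n⟩
  have hplim : Tendsto p atTop (𝓝 (⨅ n, p n)) := tendsto_atTop_ciInf hp_anti hbdd
  have hPle : ∀ n, (⨅ n, p n) ≤ p n := fun n => ciInf_le hbdd n
  show Tendsto (fun u : Finset ℕ => ∏ i ∈ u, f i) atTop (𝓝 (⨅ n, p n))
  rw [Metric.tendsto_atTop] at hplim ⊢
  intro ε hε
  obtain ⟨N, hN⟩ := hplim ε hε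
  refine ⟨range N, fun u hu => ?_⟩
  have hu' : range N ⊆ u := hu
  have h1u : ∏ i ∈ u, f i ≤ p N := by
    rw [← Finset.prod_sdiff hu']
    have ha : ∏ i ∈ u \ range N, f i ≤ 1 :=
      Finset.prod_le_one (fun i _ => h0 i) (fun i _ => h1 i)
    have hb : (0:ℝ) ≤ ∏ i ∈ range N, f i := prod_nonneg fun j _ => h0 j
    calc (∏ i ∈ u \ range N, f i) * ∏ i ∈ range N, f i
        ≤ 1 * ∏ i ∈ range N, f i := mul_le_mul_of_nonneg_right ha hb
      _ = p N := by rw [one_mul]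
  have h2u : (⨅ n, p n) ≤ ∏ i ∈ u, f i := by
    have hun : u ⊆ range ((u.sup id)+1) := by
      intro x hx
      rw [mem_range]
      exact Nat.lt_succ_of_le (Finset.le_sup (f := id) hx)
    calc (⨅ n, p n) ≤ p ((u.sup id)+1) := hPle _
      _ ≤ ∏ i ∈ u, f i := by
          rw [hp]
          simp only []
          rw [← Finset.prod_sdiff hun]
          have ha : ∏ i ∈ range ((u.sup id)+1) \ u, f i ≤ 1 :=
            Finset.prod_le_one (fun i _ => h0 i) (fun i _ => h1 i)
          have hb : (0:ℝ) ≤ ∏ i ∈ u, f i := prod_nonneg fun j _ => h0 j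
          calc (∏ i ∈ range ((u.sup id)+1) \ u, f i) * ∏ i ∈ u, f i
              ≤ 1 * ∏ i ∈ u, f i := mul_le_mul_of_nonneg_right ha hb
            _ = ∏ i ∈ u, f i := one_mul _
  have h3 : |p N - (⨅ n, p n)| < ε := by simpa [Real.dist_eq] using hN N le_rfl
  rw [Real.dist_eq, abs_of_nonneg (by linarith)]
  have h4 : p N - (⨅ n, p n) < ε := lt_of_abs_lt h3
  linarith

private noncomputable def pf (s : ℝ) (j : ℕ) : ℝ :=
  ((2:ℝ) ^ (j+1) - 1) / ((2:ℝ) ^ (j+1) - 1 + s)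

private noncomputable def pt (s : ℝ) (j : ℕ) : ℝ :=
  (-1:ℝ) ^ j * 2 ^ (j+1) / ((2:ℝ) ^ (j+1) - 1 + s) * ∏ l ∈ Finset.range j, ((2:ℝ) ^ (l+1) - 1)⁻¹

/-- Partial fraction expansion: for `s > 0`,
`∏_{j=1}^∞ (2^j - 1)/(2^j - 1 + s)
  = ∑_{j=1}^∞ (-1)^{j-1} 2^j/(2^j - 1 + s) ∏_{l=1}^{j-1} 1/(2^l - 1)`
(indices shifted by one here, so `j, l` run from `0`). -/
theorem product_eq_partial_fractions (s : ℝ) (hs : 0 < s) :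
    ∏' j : ℕ, ((2 : ℝ) ^ (j + 1) - 1) / ((2 : ℝ) ^ (j + 1) - 1 + s) =
      ∑' j : ℕ, (-1 : ℝ) ^ j * 2 ^ (j + 1) / ((2 : ℝ) ^ (j + 1) - 1 + s) *
        ∏ l ∈ Finset.range j, ((2 : ℝ) ^ (l + 1) - 1)⁻¹ := by
  have hdpos : ∀ j : ℕ, 0 < (2:ℝ) ^ (j+1) - 1 + s := fun j => by linarith [one_lt_pow2 j]
  have hd1 : ∀ j : ℕ, 1 ≤ (2:ℝ) ^ (j+1) - 1 + s := fun j => by linarith [two_le_pow j]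
  have hdne : ∀ j : ℕ, (2:ℝ) ^ (j+1) - 1 + s ≠ 0 := fun j => ne_of_gt (hdpos j)
  have hf0 : ∀ j, 0 ≤ pf s j :=
    fun j => le_of_lt (div_pos (by linarith [one_lt_pow2 j]) (hdpos j))
  have hf1 : ∀ j, pf s j ≤ 1 := fun j => (div_le_one (hdpos j)).2 (by linarith [hs])
  have hasP := hasProd_of_anti hf0 hf1
  have hprod : Tendsto (fun n => ∏ j ∈ range n, pf s j) atTop (𝓝 (∏' j, pf s j)) :=
    hasP.multipliable.hasProd.tendsto_prod_nat
  -- summability of the series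
  have hQinv_pos : ∀ j, 0 < ∏ l ∈ range j, ((2:ℝ) ^ (l+1) - 1)⁻¹ :=
    fun j => prod_pos fun l _ => inv_pos.2 (by linarith [one_lt_pow2 l])
  have ht_abs : ∀ j, |pt s j|
      = 2 ^ (j+1) / ((2:ℝ) ^ (j+1) - 1 + s) * ∏ l ∈ range j, ((2:ℝ) ^ (l+1) - 1)⁻¹ := by
    intro j
    simp only [pt]
    rw [abs_mul, abs_div, abs_mul, abs_pow, abs_neg, abs_one, one_pow, one_mul,
      abs_of_pos (show (0:ℝ) < 2 ^ (j+1) from by positivity), abs_of_pos (hdpos j),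
      abs_of_pos (hQinv_pos j)]
  have ht_le : ∀ j, |pt s j| ≤ 16 * (1/2:ℝ) ^ j := by
    intro j
    rw [ht_abs j]
    calc 2 ^ (j+1) / ((2:ℝ) ^ (j+1) - 1 + s) * ∏ l ∈ range j, ((2:ℝ) ^ (l+1) - 1)⁻¹
        ≤ 2 ^ (j+1) * ∏ l ∈ range j, ((2:ℝ) ^ (l+1) - 1)⁻¹ := by
          apply mul_le_mul_of_nonneg_right _ (le_of_lt (hQinv_pos j))
          exact div_le_self (by positivity) (hd1 j)
      _ ≤ 16 * (1/2:ℝ) ^ j := pfc_bound j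
  have hts : Summable (fun j => pt s j) := by
    apply Summable.of_abs
    apply Summable.of_nonneg_of_le (fun j => abs_nonneg _) ht_le
    exact summable_geometric_two.mul_left 16
  have hsum : Tendsto (fun n => ∑ j ∈ range n, pt s j) atTop (𝓝 (∑' j, pt s j)) :=
    hts.hasSum.tendsto_sum_nat
  -- the difference of partial products and partial sums tends to 0
  have hdiff : ∀ n : ℕ, |∏ j ∈ range (n+1), pf s j - ∑ j ∈ range (n+1), pt s j|
      ≤ 16 * ((n:ℝ)+1)^2 * (1/2:ℝ) ^ (n+1) := by
    intro n
    have hfin : ∏ j ∈ range (n+1), pf s j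
        = ∑ j ∈ range (n+1), pfA (n+1) j / ((2:ℝ) ^ (j+1) - 1 + s) :=
      pfA_sum n s (fun j _ => hdne j)
    have htj : ∀ j, pt s j = pfc j / ((2:ℝ) ^ (j+1) - 1 + s) := by
      intro j; simp only [pt, pfc]; ring
    rw [hfin, show ∑ j ∈ range (n+1), pt s j
        = ∑ j ∈ range (n+1), pfc j / ((2:ℝ) ^ (j+1) - 1 + s) from
        sum_congr rfl fun j _ => htj j, ← Finset.sum_sub_distrib]
    refine le_trans (Finset.abs_sum_le_sum_abs _ _) ?_
    have hterm : ∀ j ∈ range (n+1),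
        |pfA (n+1) j / ((2:ℝ) ^ (j+1) - 1 + s) - pfc j / ((2:ℝ) ^ (j+1) - 1 + s)|
          ≤ 16 * ((j:ℝ)+1) * (1/2:ℝ) ^ (n+1) := by
      intro j hj; rw [mem_range] at hj
      set m := n - j with hmdef
      have hm : n + 1 = j + 1 + m := by omega
      have hA : pfA (n+1) j = pfc j * ∏ i ∈ range (j+1), (1 - ((2:ℝ) ^ (m+1+i))⁻¹) := by
        rw [hm]; exact pfA_closed j m
      set w := ∏ i ∈ range (j+1), (1 - ((2:ℝ) ^ (m+1+i))⁻¹) with hw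
      have hx0 : ∀ i ∈ range (j+1), 0 ≤ ((2:ℝ) ^ (m+1+i))⁻¹ := fun i _ => by positivity
      have hx1 : ∀ i ∈ range (j+1), ((2:ℝ) ^ (m+1+i))⁻¹ ≤ 1 := by
        intro i _
        exact inv_le_one_of_one_le₀ (one_le_pow₀ one_le_two)
      have hw1 : w ≤ 1 := by
        rw [hw]
        exact Finset.prod_le_one (fun i hi => by linarith [hx1 i hi])
          (fun i hi => by linarith [hx0 i hi])
      have hwge : 1 - ∑ i ∈ range (j+1), ((2:ℝ) ^ (m+1+i))⁻¹ ≤ w := weier _ _ hx0 hx1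
      have hsumx : ∑ i ∈ range (j+1), ((2:ℝ) ^ (m+1+i))⁻¹ ≤ ((j:ℝ)+1) * (1/2:ℝ) ^ (m+1) := by
        have hb : ∀ i ∈ range (j+1), ((2:ℝ) ^ (m+1+i))⁻¹ ≤ (1/2:ℝ) ^ (m+1) := by
          intro i _
          rw [show (1/2:ℝ) ^ (m+1) = ((2:ℝ) ^ (m+1))⁻¹ from by
            rw [div_pow, one_pow, one_div]]
          exact inv_anti₀ (by positivity) (pow_le_pow_right₀ one_le_two (by omega))
        calc ∑ i ∈ range (j+1), ((2:ℝ) ^ (m+1+i))⁻¹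
            ≤ (range (j+1)).card • (1/2:ℝ) ^ (m+1) := Finset.sum_le_card_nsmul _ _ _ hb
          _ = ((j:ℝ)+1) * (1/2:ℝ) ^ (m+1) := by
              rw [card_range, nsmul_eq_mul]; push_cast; ring
      have hpfc : |pfc j| ≤ 16 * (1/2:ℝ) ^ j := by
        have habs : |pfc j| = 2 ^ (j+1) * ∏ l ∈ range j, ((2:ℝ) ^ (l+1) - 1)⁻¹ := by
          simp only [pfc]
          rw [abs_mul, abs_mul, abs_pow, abs_neg, abs_one, one_pow, one_mul,
            abs_of_pos (show (0:ℝ) < 2 ^ (j+1) from by positivity), abs_of_pos (hQinv_pos j)]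
        rw [habs]; exact pfc_bound j
      calc |pfA (n+1) j / ((2:ℝ) ^ (j+1) - 1 + s) - pfc j / ((2:ℝ) ^ (j+1) - 1 + s)|
          = |pfA (n+1) j - pfc j| / ((2:ℝ) ^ (j+1) - 1 + s) := by
            rw [div_sub_div_same, abs_div, abs_of_pos (hdpos j)]
        _ ≤ |pfA (n+1) j - pfc j| := div_le_self (abs_nonneg _) (hd1 j)
        _ = |pfc j| * (1 - w) := by
            rw [hA, show pfc j * w - pfc j = pfc j * (w - 1) from by ring, abs_mul,
              abs_of_nonpos (by linarith : w - 1 ≤ 0)]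
            ring
        _ ≤ (16 * (1/2:ℝ) ^ j) * (((j:ℝ)+1) * (1/2:ℝ) ^ (m+1)) := by
            apply mul_le_mul hpfc (by linarith) (by linarith) (by positivity)
        _ = 16 * ((j:ℝ)+1) * (1/2:ℝ) ^ (n+1) := by
            rw [show n + 1 = j + (m+1) from by omega, pow_add]; ring
    refine le_trans (Finset.sum_le_sum hterm) ?_
    have hb2 : ∀ j ∈ range (n+1),
        16 * ((j:ℝ)+1) * (1/2:ℝ) ^ (n+1) ≤ 16 * ((n:ℝ)+1) * (1/2:ℝ) ^ (n+1) := by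
      intro j hj; rw [mem_range] at hj
      have hc : ((j:ℝ)+1) ≤ (n:ℝ)+1 := by
        have : (j:ℝ) ≤ (n:ℝ) := Nat.cast_le.2 (by omega)
        linarith
      have hp : (0:ℝ) ≤ (1/2:ℝ) ^ (n+1) := by positivity
      nlinarith
    calc ∑ j ∈ range (n+1), 16 * ((j:ℝ)+1) * (1/2:ℝ) ^ (n+1)
        ≤ ∑ _j ∈ range (n+1), 16 * ((n:ℝ)+1) * (1/2:ℝ) ^ (n+1) := Finset.sum_le_sum hb2
      _ = ((n:ℝ)+1) * (16 * ((n:ℝ)+1) * (1/2:ℝ) ^ (n+1)) := by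
          rw [Finset.sum_const, card_range, nsmul_eq_mul]; push_cast; ring
      _ = 16 * ((n:ℝ)+1)^2 * (1/2:ℝ) ^ (n+1) := by ring
  have hbound_tendsto : Tendsto (fun n : ℕ => 16 * ((n:ℝ)+1)^2 * (1/2:ℝ) ^ (n+1))
      atTop (𝓝 0) := by
    have hgeo : Tendsto (fun n : ℕ => ((n:ℝ))^2 * (1/2:ℝ) ^ n) atTop (𝓝 0) :=
      (summable_pow_mul_geometric_of_norm_lt_one 2
        (show ‖(1/2:ℝ)‖ < 1 from by rw [Real.norm_eq_abs, abs_div, abs_one, abs_two]; norm_num)).tendsto_atTop_zero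
    have h0 : Tendsto (fun n : ℕ => (((n+1:ℕ)):ℝ)^2 * (1/2:ℝ) ^ (n+1)) atTop (𝓝 0) :=
      hgeo.comp (tendsto_add_atTop_nat 1)
    have h1 : Tendsto (fun n : ℕ => 16 * ((((n+1:ℕ)):ℝ)^2 * (1/2:ℝ) ^ (n+1)))
        atTop (𝓝 (16 * 0)) := h0.const_mul 16
    rw [mul_zero] at h1
    exact h1.congr (fun n => by push_cast; ring)
  have hdiff0 : Tendsto (fun n => ∏ j ∈ range (n+1), pf s j - ∑ j ∈ range (n+1), pt s j)
      atTop (𝓝 0) :=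
    squeeze_zero_norm (fun n => by simpa [Real.norm_eq_abs] using hdiff n) hbound_tendsto
  have h3 : Tendsto (fun n => ∏ j ∈ range (n+1), pf s j - ∑ j ∈ range (n+1), pt s j)
      atTop (𝓝 ((∏' j, pf s j) - ∑' j, pt s j)) :=
    (hprod.comp (tendsto_add_atTop_nat 1)).sub (hsum.comp (tendsto_add_atTop_nat 1))
  have hz := tendsto_nhds_unique h3 hdiff0
  exact sub_eq_zero.1 hz
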